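/- Let N and 𝒩 be positive integers and n ≥ 1 an integer. Let K and L be N×N complex matrices such that the only N×N complex matrix X with K·X = X·L is X = 0. Let a be an 𝒩×𝒩 complex diagonal matrix. Let r, s : ℂ → (N×𝒩 complex matrices) and M : ℂ → (N×N complex matrices) be functions such that at every t ∈ ℂ: r has derivative Kⁿ·r(t)·a at t, s has derivative −(Lᵀ)ⁿ·s(t)·a at t, M is differentiable at t, and K·M(t) − M(t)·L = r(t)·s(t)ᵀ. Then at every t ∈ ℂ the derivative of M equals Σ_{l=0}^{n−1} K^{n−1−l}·r(t)·a·s(t)ᵀ·L^{l}. -/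

import Mathlib

open Matrix

theorem stmt_1 (N Nc : ℕ) (hN : 0 < N) (hNc : 0 < Nc) (n : ℕ) (hn : 1 ≤ n)
    (K L : Matrix (Fin N) (Fin N) ℂ)
    (huniq : ∀ X : Matrix (Fin N) (Fin N) ℂ, K * X = X * L → X = 0)
    (d : Fin Nc → ℂ)
    (r s : ℂ → Matrix (Fin N) (Fin Nc) ℂ)
    (M : ℂ → Matrix (Fin N) (Fin N) ℂ)
    (hr : ∀ (t : ℂ) (p : Fin N) (q : Fin Nc),
      HasDerivAt (fun u => r u p q) ((K ^ n * r t * Matrix.diagonal d) p q) t)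
    (hs : ∀ (t : ℂ) (p : Fin N) (q : Fin Nc),
      HasDerivAt (fun u => s u p q) ((-((Lᵀ) ^ n * s t * Matrix.diagonal d)) p q) t)
    (hM : ∀ (t : ℂ) (p q : Fin N), DifferentiableAt ℂ (fun u => M u p q) t)
    (hSyl : ∀ t : ℂ, K * M t - M t * L = r t * (s t)ᵀ) :
    ∀ (t : ℂ) (p q : Fin N), HasDerivAt (fun u => M u p q)
      ((∑ l ∈ Finset.range n,
        K ^ (n - 1 - l) * r t * Matrix.diagonal d * (s t)ᵀ * L ^ l) p q) t := by
  intro t p q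
  -- entrywise derivative matrix of M at t
  set D : Matrix (Fin N) (Fin N) ℂ := fun i j => deriv (fun u => M u i j) t with hD
  have hMD : ∀ i j, HasDerivAt (fun u => M u i j) (D i j) t := fun i j =>
    (hM t i j).hasDerivAt
  set S : Matrix (Fin N) (Fin N) ℂ :=
    ∑ l ∈ Finset.range n,
      K ^ (n - 1 - l) * r t * Matrix.diagonal d * (s t)ᵀ * L ^ l with hS
  -- the right-hand side derivative matrix
  set R : Matrix (Fin N) (Fin N) ℂ :=
    K ^ n * r t * Matrix.diagonal d * (s t)ᵀ
      - r t * Matrix.diagonal d * (s t)ᵀ * L ^ n with hR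
  -- Step 1: K * D - D * L = R (differentiate the Sylvester equation entrywise)
  have step1 : K * D - D * L = R := by
    ext i j
    have hLHS : HasDerivAt
        (fun u => (∑ k, K i k * M u k j) - (∑ k, M u i k * L k j))
        ((K * D - D * L) i j) t := by
      have h1 : HasDerivAt (fun u => ∑ k, K i k * M u k j) ((K * D) i j) t := by
        rw [Matrix.mul_apply]
        exact HasDerivAt.fun_sum fun k _ => (hMD k j).const_mul (K i k)
      have h2 : HasDerivAt (fun u => ∑ k, M u i k * L k j) ((D * L) i j) t := by
        rw [Matrix.mul_apply]
        exact HasDerivAt.fun_sum fun k _ => (hMD i k).mul_const (L k j)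
      simpa [Matrix.sub_apply] using h1.fun_sub h2
    have hRHS : HasDerivAt (fun u => ∑ k, r u i k * s u j k) (R i j) t := by
      have h3 : HasDerivAt (fun u => ∑ k, r u i k * s u j k)
          (∑ k, ((K ^ n * r t * Matrix.diagonal d) i k * s t j k
            + r t i k * (-(Lᵀ ^ n * s t * Matrix.diagonal d)) j k)) t :=
        HasDerivAt.fun_sum fun k _ => (hr t i k).fun_mul (hs t j k)
      have hval : (∑ k, ((K ^ n * r t * Matrix.diagonal d) i k * s t j k
            + r t i k * (-(Lᵀ ^ n * s t * Matrix.diagonal d)) j k)) = R i j := by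
        rw [Finset.sum_add_distrib]
        have e1 : (∑ k, (K ^ n * r t * Matrix.diagonal d) i k * s t j k)
            = (K ^ n * r t * Matrix.diagonal d * (s t)ᵀ) i j := by
          rw [Matrix.mul_apply]
          simp [Matrix.transpose_apply]
        have e2 : (∑ k, r t i k * (-(Lᵀ ^ n * s t * Matrix.diagonal d)) j k)
            = -((r t * Matrix.diagonal d * (s t)ᵀ * L ^ n) i j) := by
          have hkey : (Lᵀ ^ n * s t * Matrix.diagonal d)ᵀ
              = Matrix.diagonal d * (s t)ᵀ * L ^ n := by
            simp [Matrix.transpose_mul, Matrix.transpose_pow, Matrix.mul_assoc]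
          have h4 : r t * (Lᵀ ^ n * s t * Matrix.diagonal d)ᵀ
              = r t * Matrix.diagonal d * (s t)ᵀ * L ^ n := by
            rw [hkey]; simp only [Matrix.mul_assoc]
          rw [← h4, Matrix.mul_apply]
          simp [Matrix.transpose_apply, mul_neg, Finset.sum_neg_distrib]
        rw [e1, e2, hR]
        simp [Matrix.sub_apply, sub_eq_add_neg]
      rwa [hval] at h3
    have hfun : (fun u => (∑ k, K i k * M u k j) - (∑ k, M u i k * L k j))
        = (fun u => ∑ k, r u i k * s u j k) := by
      funext u
      have := congrFun (congrFun (hSyl u) i) j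
      simpa [Matrix.sub_apply, Matrix.mul_apply, Matrix.transpose_apply] using this
    rw [hfun] at hLHS
    have := hLHS.unique hRHS
    simpa using this
  -- Step 2: K * S - S * L = R (telescoping)
  have step2 : K * S - S * L = R := by
    have hKS : K * S = ∑ l ∈ Finset.range n,
        K ^ (n - l) * r t * Matrix.diagonal d * (s t)ᵀ * L ^ l := by
      rw [hS, Finset.mul_sum]
      refine Finset.sum_congr rfl fun l hl => ?_
      have hln : l < n := Finset.mem_range.mp hl
      have : K * K ^ (n - 1 - l) = K ^ (n - l) := by
        rw [← pow_succ']
        congr 1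
        omega
      rw [← Matrix.mul_assoc, ← Matrix.mul_assoc, ← Matrix.mul_assoc,
        ← Matrix.mul_assoc, this]
    have hSL : S * L = ∑ l ∈ Finset.range n,
        K ^ (n - (l + 1)) * r t * Matrix.diagonal d * (s t)ᵀ * L ^ (l + 1) := by
      rw [hS, Finset.sum_mul]
      refine Finset.sum_congr rfl fun l hl => ?_
      have : n - (l + 1) = n - 1 - l := by omega
      rw [this, Matrix.mul_assoc, ← pow_succ]
    rw [hKS, hSL, ← Finset.sum_sub_distrib]
    have := Finset.sum_range_sub'
      (f := fun l => K ^ (n - l) * r t * Matrix.diagonal d * (s t)ᵀ * L ^ l) (n := n)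
    rw [this, hR]
    simp
  -- Step 3: uniqueness
  have hDS : D = S := by
    have h0 : K * (D - S) = (D - S) * L := by
      have : K * D - D * L = K * S - S * L := by rw [step1, step2]
      rw [Matrix.mul_sub, Matrix.sub_mul]
      linear_combination (norm := abel) this
    have := huniq (D - S) h0
    exact sub_eq_zero.mp this
  have := hMD p q
  rw [hDS] at this
  exact this
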